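/- Let G : ℝ → ℝ be twice differentiable with G(0) = 0, let (X, μ) be a measure space, and let p : ℝ^m → X → ℝ be a parametrized family of probability densities with p(θ)(x) > 0 μ-a.e. and ∫_X p(θ)(x) dμ = 1 for every θ. Fix θ₀ ∈ ℝ^m and indices j, k. Assume that for μ-a.e. x the map θ ↦ p(θ)(x) has first and second partial derivatives in the j-th and k-th directions, that differentiation under the integral sign is valid up to second order at θ₀ for A(θ) = D_G(p(θ)‖p(θ₀)) = ∫_X p(θ)(x) G(ln(p(θ)(x)/p(θ₀)(x))) dμ, and that ∫_X ∂_j p(θ₀)(x) dμ = 0 and ∫_X ∂_j ∂_k p(θ₀)(x) dμ = 0. Then the Hessian entry ∂_j ∂_k A(θ₀) equals (G'(0) + G''(0)) · g_{jk}(θ₀), where g_{jk}(θ₀) = ∫_X p(θ₀)(x) · ∂_j ln p(θ)(x)|_{θ₀} · ∂_k ln p(θ)(x)|_{θ₀} dμ is the standard Fisher information matrix. In other words, the Fisher metric group is the standard Fisher metric multiplied by the factor G'(0) + G''(0). -/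

import Mathlib

open MeasureTheory

/-- (Fisher metric group.) The Hessian at `θ = θ₀` of the relative
entropy group `A(θ) = D_G(p(θ) ‖ p(θ₀)) = ∫ p(θ)(x) · G(ln (p(θ)(x)/p(θ₀)(x))) dμ`
equals `(G'(0) + G''(0)) · g_{jk}(θ₀)`, where
`g_{jk}(θ₀) = ∫ p(θ₀)(x) · ∂_j ln p(θ) |_{θ₀} · ∂_k ln p(θ) |_{θ₀} dμ` is the
standard Fisher information matrix: the Fisher metric group is the standard
Fisher metric multiplied by the factor `G'(0) + G''(0)`.

Here `p₁ i θ x` is the `i`-th first partial derivative of `θ ↦ p θ x`, `p₂` is the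
mixed second partial `∂_j ∂_k p` at `θ₀`, `dA` is the partial derivative of `A` in
the `k`-th direction (along the `j`-line through `θ₀`), and the hypotheses
`hq₁, hDUI₁, hq₂, hDUI₂` express that differentiation under the integral sign is
valid up to second order at `θ₀`. -/
theorem fisher_metric_group
    {X : Type*} [MeasurableSpace X] (μ : Measure X) {m : ℕ}
    (G : ℝ → ℝ) (hG0 : G 0 = 0)
    (hGdiff : Differentiable ℝ G) (hGdiff2 : Differentiable ℝ (deriv G))
    (p : (Fin m → ℝ) → X → ℝ)
    -- `p` is a parametrized family of probability densities
    (hppos : ∀ θ : Fin m → ℝ, ∀ᵐ x ∂μ, 0 < p θ x)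
    (hpone : ∀ θ : Fin m → ℝ, ∫ x, p θ x ∂μ = 1)
    (θ₀ : Fin m → ℝ) (j k : Fin m)
    -- for μ-a.e. x, the map θ ↦ p θ x has first partial derivatives `p₁ i θ x` ...
    (p₁ : Fin m → (Fin m → ℝ) → X → ℝ)
    (hp₁ : ∀ᵐ x ∂μ, ∀ (i : Fin m) (θ : Fin m → ℝ),
      HasDerivAt (fun s => p (Function.update θ i s) x) (p₁ i θ x) (θ i))
    -- ... and the mixed second partial derivative `∂_j ∂_k p = p₂` at θ₀
    (p₂ : X → ℝ)
    (hp₂ : ∀ᵐ x ∂μ, HasDerivAt (fun s => p₁ k (Function.update θ₀ j s) x) (p₂ x) (θ₀ j))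
    -- `A θ = D_G(p θ ‖ p θ₀)`, and `dA = ∂_k A` along the j-line through θ₀
    (A dA : (Fin m → ℝ) → ℝ)
    (hA : ∀ θ, A θ = ∫ x, p θ x * G (Real.log (p θ x / p θ₀ x)) ∂μ)
    (hdA : ∀ s : ℝ, HasDerivAt
      (fun t => A (Function.update (Function.update θ₀ j s) k t))
      (dA (Function.update θ₀ j s)) (Function.update θ₀ j s k))
    -- differentiation under the integral sign is valid to first order ...
    (q₁ : ℝ → X → ℝ)
    (hq₁ : ∀ᵐ x ∂μ, ∀ s : ℝ, HasDerivAt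
      (fun t => p (Function.update (Function.update θ₀ j s) k t) x *
        G (Real.log (p (Function.update (Function.update θ₀ j s) k t) x / p θ₀ x)))
      (q₁ s x) (Function.update θ₀ j s k))
    (hDUI₁ : ∀ s : ℝ, dA (Function.update θ₀ j s) = ∫ x, q₁ s x ∂μ)
    -- ... and to second order at θ₀
    (q₂ : X → ℝ)
    (hq₂ : ∀ᵐ x ∂μ, HasDerivAt (fun s => q₁ s x) (q₂ x) (θ₀ j))
    (hDUI₂ : HasDerivAt (fun s => ∫ x, q₁ s x ∂μ) (∫ x, q₂ x ∂μ) (θ₀ j))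
    -- the integrals of the derivatives of `p` vanish at θ₀
    (hvan₁ : ∫ x, p₁ j θ₀ x ∂μ = 0)
    (hvan₂ : ∫ x, p₂ x ∂μ = 0)
    -- (integrability of the pieces)
    (hint₂ : Integrable p₂ μ)
    (hfish : Integrable
      (fun x => p θ₀ x * ((p₁ j θ₀ x / p θ₀ x) * (p₁ k θ₀ x / p θ₀ x))) μ) :
    HasDerivAt (fun s => dA (Function.update θ₀ j s))
      ((deriv G 0 + deriv (deriv G) 0) *
        ∫ x, p θ₀ x * ((p₁ j θ₀ x / p θ₀ x) * (p₁ k θ₀ x / p θ₀ x)) ∂μ)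
      (θ₀ j) := by

  classical
  set c₁ : ℝ := deriv G 0 with hc₁
  set c₂ : ℝ := deriv G 0 + deriv (deriv G) 0 with hc₂
  -- pointwise identification of q₂
  have hae : ∀ᵐ x ∂μ, q₂ x = c₁ * p₂ x +
      c₂ * (p θ₀ x * ((p₁ j θ₀ x / p θ₀ x) * (p₁ k θ₀ x / p θ₀ x))) := by
    filter_upwards [hp₁, hp₂, hq₁, hq₂, hppos θ₀] with x hx₁ hx₂ hxq₁ hxq₂ hxpos
    have hcne : p θ₀ x ≠ 0 := ne_of_gt hxpos
    -- derivative of u(s) = p (update θ₀ j s) x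
    have hu : HasDerivAt (fun s => p (Function.update θ₀ j s) x) (p₁ j θ₀ x) (θ₀ j) :=
      hx₁ j θ₀
    have hueq : p (Function.update θ₀ j (θ₀ j)) x = p θ₀ x := by
      rw [Function.update_eq_self]
    -- positivity near θ₀ j
    have hpos : ∀ᶠ s in nhds (θ₀ j), 0 < p (Function.update θ₀ j s) x := by
      have hmem : p (Function.update θ₀ j (θ₀ j)) x ∈ Set.Ioi (0:ℝ) := by
        rw [hueq]; exact hxpos
      exact hu.continuousAt.eventually_mem (isOpen_Ioi.mem_nhds hmem)
    -- formula for q₁ near θ₀ j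
    have hq1eq : ∀ᶠ s in nhds (θ₀ j), q₁ s x =
        p₁ k (Function.update θ₀ j s) x *
          (G (Real.log (p (Function.update θ₀ j s) x / p θ₀ x)) +
           deriv G (Real.log (p (Function.update θ₀ j s) x / p θ₀ x))) := by
      filter_upwards [hpos] with s hs
      set θs := Function.update θ₀ j s with hθs
      have hsne : p θs x ≠ 0 := ne_of_gt hs
      have hw : HasDerivAt (fun t => p (Function.update θs k t) x) (p₁ k θs x) (θs k) :=
        hx₁ k θs
      have hwt : p (Function.update θs k (θs k)) x = p θs x := by
        rw [Function.update_eq_self]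
      have hdiv : HasDerivAt (fun t => p (Function.update θs k t) x / p θ₀ x)
          (p₁ k θs x / p θ₀ x) (θs k) := hw.div_const _
      have hlogpt : Real.log (p (Function.update θs k (θs k)) x / p θ₀ x)
          = Real.log (p θs x / p θ₀ x) := by rw [hwt]
      have hlog : HasDerivAt (fun t => Real.log (p (Function.update θs k t) x / p θ₀ x))
          (p₁ k θs x / p θs x) (θs k) := by
        have hne : p (Function.update θs k (θs k)) x / p θ₀ x ≠ 0 := by
          rw [hwt]; exact div_ne_zero hsne hcne
        have := (Real.hasDerivAt_log hne).comp (θs k) hdiv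
        refine this.congr_deriv ?_
        rw [hwt]
        field_simp
      have hGL : HasDerivAt
          (fun t => G (Real.log (p (Function.update θs k t) x / p θ₀ x)))
          (deriv G (Real.log (p θs x / p θ₀ x)) * (p₁ k θs x / p θs x)) (θs k) := by
        have := ((hGdiff _).hasDerivAt).comp (θs k) hlog
        rwa [hlogpt] at this
      have hF := hw.mul hGL
      have huniq := (hxq₁ s).unique hF
      rw [huniq, hwt]
      field_simp
    -- derivative of the formula at θ₀ j
    have hv : HasDerivAt (fun s => p₁ k (Function.update θ₀ j s) x) (p₂ x) (θ₀ j) := hx₂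
    have hveq : p₁ k (Function.update θ₀ j (θ₀ j)) x = p₁ k θ₀ x := by
      rw [Function.update_eq_self]
    have hdivu : HasDerivAt (fun s => p (Function.update θ₀ j s) x / p θ₀ x)
        (p₁ j θ₀ x / p θ₀ x) (θ₀ j) := hu.div_const _
    have hL : HasDerivAt (fun s => Real.log (p (Function.update θ₀ j s) x / p θ₀ x))
        (p₁ j θ₀ x / p θ₀ x) (θ₀ j) := by
      have hne : p (Function.update θ₀ j (θ₀ j)) x / p θ₀ x ≠ 0 := by
        rw [hueq]; exact div_ne_zero hcne hcne
      have := (Real.hasDerivAt_log hne).comp (θ₀ j) hdivu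
      refine this.congr_deriv ?_
      rw [hueq]
      field_simp
    have hL0 : Real.log (p (Function.update θ₀ j (θ₀ j)) x / p θ₀ x) = 0 := by
      rw [hueq, div_self hcne, Real.log_one]
    have hGL : HasDerivAt
        (fun s => G (Real.log (p (Function.update θ₀ j s) x / p θ₀ x)))
        (deriv G 0 * (p₁ j θ₀ x / p θ₀ x)) (θ₀ j) := by
      have := ((hGdiff _).hasDerivAt).comp (θ₀ j) hL
      rwa [hL0] at this
    have hGL' : HasDerivAt
        (fun s => deriv G (Real.log (p (Function.update θ₀ j s) x / p θ₀ x)))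
        (deriv (deriv G) 0 * (p₁ j θ₀ x / p θ₀ x)) (θ₀ j) := by
      have := ((hGdiff2 _).hasDerivAt).comp (θ₀ j) hL
      rwa [hL0] at this
    have hprod : HasDerivAt
        (fun s => p₁ k (Function.update θ₀ j s) x *
          (G (Real.log (p (Function.update θ₀ j s) x / p θ₀ x)) +
           deriv G (Real.log (p (Function.update θ₀ j s) x / p θ₀ x))))
        (p₂ x * (G (Real.log (p (Function.update θ₀ j (θ₀ j)) x / p θ₀ x)) +
           deriv G (Real.log (p (Function.update θ₀ j (θ₀ j)) x / p θ₀ x))) +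
         p₁ k (Function.update θ₀ j (θ₀ j)) x *
           (deriv G 0 * (p₁ j θ₀ x / p θ₀ x) + deriv (deriv G) 0 * (p₁ j θ₀ x / p θ₀ x)))
        (θ₀ j) := hv.mul (hGL.add hGL')
    have hq2 : HasDerivAt (fun s => q₁ s x)
        (p₂ x * (G (Real.log (p (Function.update θ₀ j (θ₀ j)) x / p θ₀ x)) +
           deriv G (Real.log (p (Function.update θ₀ j (θ₀ j)) x / p θ₀ x))) +
         p₁ k (Function.update θ₀ j (θ₀ j)) x *
           (deriv G 0 * (p₁ j θ₀ x / p θ₀ x) + deriv (deriv G) 0 * (p₁ j θ₀ x / p θ₀ x)))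
        (θ₀ j) := hprod.congr_of_eventuallyEq hq1eq
    have := hxq₂.unique hq2
    rw [this, hL0, hG0, hveq, hc₁, hc₂]
    field_simp
    ring
  -- compute the integral of q₂
  have hIq : ∫ x, q₂ x ∂μ = c₂ *
      ∫ x, p θ₀ x * ((p₁ j θ₀ x / p θ₀ x) * (p₁ k θ₀ x / p θ₀ x)) ∂μ := by
    rw [integral_congr_ae hae,
      integral_add (hint₂.const_mul c₁) (hfish.const_mul c₂),
      integral_const_mul, integral_const_mul, hvan₂, mul_zero, zero_add]
  have hfun : (fun s => dA (Function.update θ₀ j s)) = fun s => ∫ x, q₁ s x ∂μ :=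
    funext hDUI₁
  rw [hfun]
  exact hIq ▸ hDUI₂
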